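/- Let g be an n-dimensional non-model filiform Lie algebra in the family F_{αγ} with invariants (z_1, z_2, n), α_1 = 0, and z_2 ≤ n − 3. Then D^2 g is contained in the span of e_2, …, e_{2n − z_1 − z_2 − 2}; in particular, if z_1 > 2(n − z_2) − 4 then D^3 g = 0 and g has derived length at most 3. -/

import Mathlib

/-- An adapted basis `e_1, …, e_n` of an `n`-dimensional filiform Lie algebra, bundled with
the underlying `Basis` used to take coordinates. -/
structure AdaptedBasis (n : ℕ) (L : Type*) [LieRing L] [LieAlgebra ℂ L] where
  b : Module.Basis (Fin n) ℂ L
  e : ℕ → L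
  he : ∀ i : Fin n, e (i.1 + 1) = b i
  adapted1 : ∀ h, 3 ≤ h → h ≤ n → ⁅e 1, e h⁆ = e (h - 1)
  adapted2 : ∀ h, 1 ≤ h → h ≤ n → ⁅e 2, e h⁆ = 0
  adapted3 : ∀ h, 2 ≤ h → h ≤ n → ⁅e 3, e h⁆ = 0

/-- `P h u` is the coordinate of `u` with respect to the basis vector `e_h` (for
`1 ≤ h ≤ n`; it is `0` for `h` out of range). -/
noncomputable def AdaptedBasis.P {n : ℕ} {L : Type*} [LieRing L] [LieAlgebra ℂ L]
    (B : AdaptedBasis n L) (h : ℕ) (u : L) : ℂ :=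
  if hh : 1 ≤ h ∧ h ≤ n then B.b.repr u ⟨h - 1, by omega⟩ else 0

/-- The general law (Theorem 2.8) of an `n`-dimensional non-model filiform Lie algebra with
invariants `(z_1, z_2, n)`, with respect to a suitable adapted basis `e_1, …, e_n`:

* `⁅e_1, e_h⁆ = e_{h-1}` for `3 ≤ h ≤ n`;
* `⁅e_{z_1+i}, e_{z_2+1}⁆ = α_1 e_{i+2} + α_2 e_{i+1} + ⋯ + α_{i+1} e_2` for `0 ≤ i ≤ z_2-z_1`;
* `⁅e_{z_1}, e_{z_2+j}⁆ = α_1 e_{j+1} + γ_1 e_j + ⋯ + γ_{j-1} e_2` for `2 ≤ j ≤ n-z_2`;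
* `⁅e_{z_1+k}, e_{z_2+ℓ}⁆ = ∑_{h=2}^{k+ℓ} P_h(⁅e_{z_1+k-1}, e_{z_2+ℓ}⁆ + ⁅e_{z_1+k}, e_{z_2+ℓ-1}⁆) e_{h+1} + β_{kℓ} e_2`
  for `2 ≤ ℓ ≤ n-z_2`, `1 ≤ k < z_2-z_1+ℓ`;
* all remaining brackets `⁅e_i, e_j⁆` with `2 ≤ i < j ≤ n` vanish;

moreover `z_1 = min {k ≥ 4 : ⁅e_k, e_n⁆ ≠ 0}` and `z_2 = min {k ≥ 4 : ⁅e_k, e_{k+1}⁆ ≠ 0}`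
(recorded via `hz1ne`, `hz2ne`, `law0`), and `4 ≤ z_1 ≤ z_2 < n ≤ 2 z_2 - 2`. -/
structure GeneralLaw (n : ℕ) (L : Type*) [LieRing L] [LieAlgebra ℂ L]
    extends AdaptedBasis n L where
  z1 : ℕ
  z2 : ℕ
  α : ℕ → ℂ
  γ : ℕ → ℂ
  β : ℕ → ℕ → ℂ
  hz : 4 ≤ z1 ∧ z1 ≤ z2 ∧ z2 < n ∧ n ≤ 2 * z2 - 2
  hz1ne : ⁅e z1, e n⁆ ≠ 0
  hz2ne : ⁅e z2, e (z2 + 1)⁆ ≠ 0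
  law0 : ∀ i j, 2 ≤ i → i < j → j ≤ n → (i < z1 ∨ j ≤ z2) → ⁅e i, e j⁆ = 0
  lawA : ∀ i, i ≤ z2 - z1 →
    ⁅e (z1 + i), e (z2 + 1)⁆ = ∑ t ∈ Finset.range (i + 1), α (t + 1) • e (i + 2 - t)
  lawB : ∀ j, 2 ≤ j → j ≤ n - z2 →
    ⁅e z1, e (z2 + j)⁆ = α 1 • e (j + 1) + ∑ t ∈ Finset.range (j - 1), γ (t + 1) • e (j - t)
  lawC : ∀ k ℓ, 2 ≤ ℓ → ℓ ≤ n - z2 → 1 ≤ k → k < z2 - z1 + ℓ →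
    ⁅e (z1 + k), e (z2 + ℓ)⁆ =
      (∑ h ∈ Finset.Icc 2 (k + ℓ),
        toAdaptedBasis.P h (⁅e (z1 + k - 1), e (z2 + ℓ)⁆ + ⁅e (z1 + k), e (z2 + ℓ - 1)⁆) •
          e (h + 1)) + β k ℓ • e 2

namespace GeneralLaw

open Submodule Set

variable {n : ℕ} {L : Type*} [LieRing L] [LieAlgebra ℂ L] (G : GeneralLaw n L)

/-- The coordinate functional as a linear map. -/
noncomputable def Pf (h : ℕ) : L →ₗ[ℂ] ℂ :=
  if hh : 1 ≤ h ∧ h ≤ n then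
    (Finsupp.lapply (⟨h - 1, by omega⟩ : Fin n)).comp (G.b.repr : L →ₗ[ℂ] (Fin n →₀ ℂ))
  else 0

lemma P_eq_Pf (h : ℕ) (u : L) : G.toAdaptedBasis.P h u = G.Pf h u := by
  unfold AdaptedBasis.P Pf
  split_ifs <;> rfl

lemma P_add (h : ℕ) (u v : L) :
    G.toAdaptedBasis.P h (u + v) = G.toAdaptedBasis.P h u + G.toAdaptedBasis.P h v := by
  simp [P_eq_Pf]

lemma P_smul (h : ℕ) (c : ℂ) (u : L) :
    G.toAdaptedBasis.P h (c • u) = c * G.toAdaptedBasis.P h u := by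
  simp [P_eq_Pf]

lemma P_zero (h : ℕ) : G.toAdaptedBasis.P h (0 : L) = 0 := by simp [P_eq_Pf]

lemma P_sum (h : ℕ) {ι : Type*} (s : Finset ι) (f : ι → L) :
    G.toAdaptedBasis.P h (∑ i ∈ s, f i) = ∑ i ∈ s, G.toAdaptedBasis.P h (f i) := by
  simp [P_eq_Pf]

lemma P_big {h : ℕ} (hh : n < h) (u : L) : G.toAdaptedBasis.P h u = 0 := by
  unfold AdaptedBasis.P
  rw [dif_neg]; omega

lemma P_basis {m j : ℕ} (hm1 : 1 ≤ m) (hmn : m ≤ n) (hj1 : 1 ≤ j) (hjn : j ≤ n) :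
    G.toAdaptedBasis.P m (G.e j) = if j = m then 1 else 0 := by
  have he' : G.e j = G.b ⟨j - 1, by omega⟩ := by
    have := G.he ⟨j - 1, by omega⟩
    simpa [Nat.sub_add_cancel hj1] using this
  unfold AdaptedBasis.P
  rw [dif_pos ⟨hm1, hmn⟩, he', G.b.repr_self, Finsupp.single_apply]
  by_cases h : j = m
  · simp [h]
  · rw [if_neg, if_neg h]
    intro hc
    apply h
    have := Fin.mk.injEq (j-1) _ (m-1) _ ▸ hc
    simp only [Fin.mk.injEq] at hc
    omega

lemma repr_total (u : L) : ∑ m ∈ Finset.Icc 1 n, G.toAdaptedBasis.P m u • G.e m = u := by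
  have h0 := G.b.sum_repr u
  have hsum : ∑ m ∈ Finset.Icc 1 n, G.toAdaptedBasis.P m u • G.e m
      = ∑ i : Fin n, G.b.repr u i • G.b i := by
    refine Finset.sum_bij' (i := fun (m : ℕ) (hm : m ∈ Finset.Icc 1 n) =>
        (⟨m - 1, by simp only [Finset.mem_Icc] at hm; omega⟩ : Fin n))
      (j := fun (i : Fin n) _ => i.1 + 1) ?_ ?_ ?_ ?_ ?_
    · intro a ha; exact Finset.mem_univ _
    · intro i _
      simp only [Finset.mem_Icc]
      have := i.isLt
      omega
    · intro a ha; simp only [Finset.mem_Icc] at ha; simp; omega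
    · intro i _; simp
    · intro m hm
      simp only [Finset.mem_Icc] at hm
      have he' : G.e m = G.b ⟨m - 1, by omega⟩ := by
        have := G.he ⟨m - 1, by omega⟩
        simpa [Nat.sub_add_cancel hm.1] using this
      unfold AdaptedBasis.P
      rw [dif_pos ⟨hm.1, hm.2⟩, he']
  rw [hsum, h0]

lemma P_span_zero {M h : ℕ} (hM : M ≤ n) (hMh : M < h) {u : L}
    (hu : u ∈ span ℂ (G.e '' Set.Icc 2 M)) : G.toAdaptedBasis.P h u = 0 := by
  rw [P_eq_Pf]
  have hker : span ℂ (G.e '' Set.Icc 2 M) ≤ LinearMap.ker (G.Pf h) := by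
    rw [span_le]
    rintro _ ⟨j, hj, rfl⟩
    simp only [Set.mem_Icc] at hj
    simp only [SetLike.mem_coe, LinearMap.mem_ker]
    rw [← P_eq_Pf]
    by_cases hhn : h ≤ n
    · rw [G.P_basis (by omega) hhn (by omega) (by omega), if_neg (by omega)]
    · exact G.P_big (by omega) _
  exact LinearMap.mem_ker.mp (hker hu)

lemma P_one_zero {M : ℕ} (hM : M ≤ n) {u : L}
    (hu : u ∈ span ℂ (G.e '' Set.Icc 2 M)) : G.toAdaptedBasis.P 1 u = 0 := by
  rw [P_eq_Pf]
  have hker : span ℂ (G.e '' Set.Icc 2 M) ≤ LinearMap.ker (G.Pf 1) := by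
    rw [span_le]
    rintro _ ⟨j, hj, rfl⟩
    simp only [Set.mem_Icc] at hj
    simp only [SetLike.mem_coe, LinearMap.mem_ker]
    rw [← P_eq_Pf]
    rw [G.P_basis (le_refl 1) (by omega) (by omega) (by omega), if_neg (by omega)]
  exact LinearMap.mem_ker.mp (hker hu)

lemma span_Icc_mono {a b : ℕ} (h : a ≤ b) :
    span ℂ (G.e '' Set.Icc 2 a) ≤ span ℂ (G.e '' Set.Icc 2 b) :=
  span_mono (Set.image_mono (Set.Icc_subset_Icc_right h))

end GeneralLaw
namespace GeneralLaw

open Submodule Set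

variable {n : ℕ} {L : Type*} [LieRing L] [LieAlgebra ℂ L] (G : GeneralLaw n L)

lemma lie_sum' (x : L) {ι : Type*} (s : Finset ι) (f : ι → L) :
    ⁅x, ∑ i ∈ s, f i⁆ = ∑ i ∈ s, ⁅x, f i⁆ := by
  classical
  induction s using Finset.induction with
  | empty => simp
  | insert _ _ hni ih => rw [Finset.sum_insert hni, Finset.sum_insert hni, lie_add, ih]

lemma lie_span_zero (x : L) (s : Set L) (h : ∀ p ∈ s, ⁅x, p⁆ = 0) :
    ∀ w ∈ span ℂ s, ⁅x, w⁆ = 0 := by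
  intro w hw
  induction hw using Submodule.span_induction with
  | mem p hp => exact h p hp
  | zero => simp
  | add a b _ _ ha hb => rw [lie_add, ha, hb, add_zero]
  | smul c a _ ha => rw [lie_smul, ha, smul_zero]

lemma lie_mem_span₂ (V : Submodule ℂ L) (s t : Set L)
    (h : ∀ p ∈ s, ∀ q ∈ t, ⁅p, q⁆ ∈ V) :
    ∀ x ∈ span ℂ s, ∀ y ∈ span ℂ t, ⁅x, y⁆ ∈ V := by
  intro x hx
  induction hx using Submodule.span_induction with
  | mem p hp =>
    intro y hy
    induction hy using Submodule.span_induction with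
    | mem q hq => exact h p hp q hq
    | zero => simp
    | add a b _ _ ha hb => rw [lie_add]; exact V.add_mem ha hb
    | smul c a _ ha => rw [lie_smul]; exact V.smul_mem c ha
  | zero => intro y _; simp
  | add a b _ _ ha hb =>
    intro y hy
    rw [add_lie]; exact V.add_mem (ha y hy) (hb y hy)
  | smul c a _ ha =>
    intro y hy
    rw [smul_lie]; exact V.smul_mem c (ha y hy)

include G in
lemma hn5 : 5 ≤ n := by
  obtain ⟨h1, h2, h3, _⟩ := G.hz
  omega

lemma lie_e1_mem (x : L) : ⁅G.e 1, x⁆ ∈ span ℂ (G.e '' Set.Icc 2 (n - 1)) := by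
  have h5 := G.hn5
  have hx := G.repr_total x
  rw [← hx, lie_sum']
  refine Submodule.sum_mem _ ?_
  intro m hm
  simp only [Finset.mem_Icc] at hm
  obtain ⟨hm1, hm2⟩ := hm
  rw [lie_smul]
  refine Submodule.smul_mem _ _ ?_
  rcases Nat.lt_or_ge m 3 with h3 | h3
  · rcases (show m = 1 ∨ m = 2 by omega) with rfl | rfl
    · rw [lie_self]
      exact Submodule.zero_mem _
    · rw [← lie_skew, G.adapted2 1 (le_refl 1) (by omega), neg_zero]
      exact Submodule.zero_mem _
  · rw [G.adapted1 m h3 hm2]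
    exact subset_span ⟨m - 1, ⟨by omega, by omega⟩, rfl⟩

lemma u_eq {i j : ℕ} (hi : 3 ≤ i) (hin : i ≤ n) (hj : 3 ≤ j) (hjn : j ≤ n) :
    ⁅G.e (i - 1), G.e j⁆ + ⁅G.e i, G.e (j - 1)⁆ = ⁅G.e 1, ⁅G.e i, G.e j⁆⁆ := by
  rw [leibniz_lie (G.e 1) (G.e i) (G.e j), G.adapted1 i hi hin, G.adapted1 j hj hjn]

/-- Key span lemma: with `α₁ = 0`, the bracket `⁅e_{z1+k}, e_{z2+ℓ}⁆` lies in the span of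
`e_2, …, e_{min (k+ℓ) n}`. -/
lemma key (hα1 : G.α 1 = 0) :
    ∀ N k ℓ, k + ℓ ≤ N → 1 ≤ ℓ → ℓ ≤ n - G.z2 → G.z1 + k < G.z2 + ℓ →
      ⁅G.e (G.z1 + k), G.e (G.z2 + ℓ)⁆ ∈ span ℂ (G.e '' Set.Icc 2 (min (k + ℓ) n)) := by
  obtain ⟨hz1, hz12, hz2n, hn2z⟩ := G.hz
  intro N
  induction N with
  | zero => intro k ℓ hN hℓ _ _; omega
  | succ N ih =>
    intro k ℓ hN hℓ1 hℓn hlt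
    rcases Nat.lt_or_ge ℓ 2 with hℓ2 | hℓ2
    · -- ℓ = 1 : law A
      have hℓeq : ℓ = 1 := by omega
      subst hℓeq
      have hk : k ≤ G.z2 - G.z1 := by omega
      rw [G.lawA k hk]
      refine Submodule.sum_mem _ ?_
      intro t ht
      simp only [Finset.mem_range] at ht
      rcases Nat.eq_zero_or_pos t with ht0 | ht1
      · subst ht0; rw [hα1, zero_smul]; exact Submodule.zero_mem _
      · refine Submodule.smul_mem _ _ (subset_span ⟨k + 2 - t, ⟨by omega, ?_⟩, rfl⟩)
        have : k + 1 ≤ n := by omega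
        omega
    · rcases Nat.eq_zero_or_pos k with hk0 | hk1
      · -- k = 0 : law B
        subst hk0
        rw [show G.z1 + 0 = G.z1 from rfl, G.lawB ℓ hℓ2 hℓn]
        refine Submodule.add_mem _ ?_ (Submodule.sum_mem _ ?_)
        · rw [hα1, zero_smul]
          exact Submodule.zero_mem _
        · intro t ht
          simp only [Finset.mem_range] at ht
          refine Submodule.smul_mem _ _ (subset_span ⟨ℓ - t, ⟨by omega, by omega⟩, rfl⟩)
      · -- law C
        have hkC : k < G.z2 - G.z1 + ℓ := by omega
        rw [G.lawC k ℓ hℓ2 hℓn hk1 hkC]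
        set u := ⁅G.e (G.z1 + k - 1), G.e (G.z2 + ℓ)⁆ + ⁅G.e (G.z1 + k), G.e (G.z2 + ℓ - 1)⁆
          with hu_def
        have hu_n1 : u ∈ span ℂ (G.e '' Set.Icc 2 (n - 1)) := by
          rw [hu_def, G.u_eq (by omega) (by omega) (by omega) (by omega)]
          exact G.lie_e1_mem _
        have hu_kl : u ∈ span ℂ (G.e '' Set.Icc 2 (min (k + ℓ - 1) n)) := by
          refine Submodule.add_mem _ ?_ ?_
          · have h1 : G.z1 + k - 1 = G.z1 + (k - 1) := by omega
            have h2 := ih (k - 1) ℓ (by omega) hℓ1 hℓn (by omega)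
            have h3 : (k - 1) + ℓ = k + ℓ - 1 := by omega
            rw [h1]
            rw [h3] at h2
            exact h2
          · by_cases hdiag : G.z1 + k = G.z2 + ℓ - 1
            · rw [show G.z2 + ℓ - 1 = G.z1 + k from hdiag.symm]
              rw [lie_self]
              exact Submodule.zero_mem _
            · have h1 : G.z2 + ℓ - 1 = G.z2 + (ℓ - 1) := by omega
              have h2 := ih k (ℓ - 1) (by omega) (by omega) (by omega) (by omega)
              have h3 : k + (ℓ - 1) = k + ℓ - 1 := by omega
              rw [h1]
              rw [h3] at h2
              exact h2
        refine Submodule.add_mem _ (Submodule.sum_mem _ ?_) ?_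
        · intro h hh
          simp only [Finset.mem_Icc] at hh
          by_cases hsm : h + 1 ≤ min (k + ℓ) n
          · exact Submodule.smul_mem _ _ (subset_span ⟨h + 1, ⟨by omega, hsm⟩, rfl⟩)
          · have hP0 : G.toAdaptedBasis.P h u = 0 := by
              rcases Nat.lt_or_ge n h with hbig | hle
              · exact G.P_big hbig u
              · by_cases hc1 : min (k + ℓ - 1) n < h
                · exact G.P_span_zero (min_le_right _ _) hc1 hu_kl
                · have hhn : h = n := by omega
                  subst hhn
                  exact G.P_span_zero (by omega) (by omega) hu_n1
            rw [hP0, zero_smul]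
            exact Submodule.zero_mem _
        · refine Submodule.smul_mem _ _ (subset_span ⟨2, ⟨le_refl 2, by omega⟩, rfl⟩)

end GeneralLaw
namespace GeneralLaw

open Submodule Set

variable {n : ℕ} {L : Type*} [LieRing L] [LieAlgebra ℂ L] (G : GeneralLaw n L)

/-- Strengthened key lemma under `α₂ = 0` and `γ₁ = 0`. -/
lemma key0 (hα1 : G.α 1 = 0) (hα2 : G.α 2 = 0) (hγ1 : G.γ 1 = 0) :
    ∀ N k ℓ, k + ℓ ≤ N → 1 ≤ ℓ → ℓ ≤ n - G.z2 → G.z1 + k < G.z2 + ℓ →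
      ⁅G.e (G.z1 + k), G.e (G.z2 + ℓ)⁆ ∈ span ℂ (G.e '' Set.Icc 2 (min (k + ℓ - 1) n)) := by
  obtain ⟨hz1, hz12, hz2n, hn2z⟩ := G.hz
  intro N
  induction N with
  | zero => intro k ℓ hN hℓ _ _; omega
  | succ N ih =>
    intro k ℓ hN hℓ1 hℓn hlt
    rcases Nat.lt_or_ge ℓ 2 with hℓ2 | hℓ2
    · have hℓeq : ℓ = 1 := by omega
      subst hℓeq
      have hk : k ≤ G.z2 - G.z1 := by omega
      rw [G.lawA k hk]
      refine Submodule.sum_mem _ ?_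
      intro t ht
      simp only [Finset.mem_range] at ht
      rcases (show t = 0 ∨ t = 1 ∨ 2 ≤ t by omega) with ht0 | ht1 | ht2
      · subst ht0; rw [hα1, zero_smul]; exact Submodule.zero_mem _
      · subst ht1; rw [hα2, zero_smul]; exact Submodule.zero_mem _
      · refine Submodule.smul_mem _ _ (subset_span ⟨k + 2 - t, ⟨by omega, ?_⟩, rfl⟩)
        have : k + 1 ≤ n := by omega
        omega
    · rcases Nat.eq_zero_or_pos k with hk0 | hk1
      · subst hk0
        rw [show G.z1 + 0 = G.z1 from rfl, G.lawB ℓ hℓ2 hℓn]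
        refine Submodule.add_mem _ ?_ (Submodule.sum_mem _ ?_)
        · rw [hα1, zero_smul]
          exact Submodule.zero_mem _
        · intro t ht
          simp only [Finset.mem_range] at ht
          rcases Nat.eq_zero_or_pos t with ht0 | ht1
          · subst ht0; rw [hγ1, zero_smul]; exact Submodule.zero_mem _
          · refine Submodule.smul_mem _ _ (subset_span ⟨ℓ - t, ⟨by omega, by omega⟩, rfl⟩)
      · have hkC : k < G.z2 - G.z1 + ℓ := by omega
        rw [G.lawC k ℓ hℓ2 hℓn hk1 hkC]
        set u := ⁅G.e (G.z1 + k - 1), G.e (G.z2 + ℓ)⁆ + ⁅G.e (G.z1 + k), G.e (G.z2 + ℓ - 1)⁆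
          with hu_def
        have hu_n1 : u ∈ span ℂ (G.e '' Set.Icc 2 (n - 1)) := by
          rw [hu_def, G.u_eq (by omega) (by omega) (by omega) (by omega)]
          exact G.lie_e1_mem _
        have hu_kl : u ∈ span ℂ (G.e '' Set.Icc 2 (min (k + ℓ - 2) n)) := by
          refine Submodule.add_mem _ ?_ ?_
          · have h1 : G.z1 + k - 1 = G.z1 + (k - 1) := by omega
            have h2 := ih (k - 1) ℓ (by omega) hℓ1 hℓn (by omega)
            have h3 : (k - 1) + ℓ - 1 = k + ℓ - 2 := by omega
            rw [h1]
            rw [h3] at h2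
            exact h2
          · by_cases hdiag : G.z1 + k = G.z2 + ℓ - 1
            · rw [show G.z2 + ℓ - 1 = G.z1 + k from hdiag.symm, lie_self]
              exact Submodule.zero_mem _
            · have h1 : G.z2 + ℓ - 1 = G.z2 + (ℓ - 1) := by omega
              have h2 := ih k (ℓ - 1) (by omega) (by omega) (by omega) (by omega)
              have h3 : k + (ℓ - 1) - 1 = k + ℓ - 2 := by omega
              rw [h1]
              rw [h3] at h2
              exact h2
        refine Submodule.add_mem _ (Submodule.sum_mem _ ?_) ?_
        · intro h hh
          simp only [Finset.mem_Icc] at hh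
          by_cases hsm : h + 1 ≤ min (k + ℓ - 1) n
          · exact Submodule.smul_mem _ _ (subset_span ⟨h + 1, ⟨by omega, hsm⟩, rfl⟩)
          · have hP0 : G.toAdaptedBasis.P h u = 0 := by
              rcases Nat.lt_or_ge n h with hbig | hle
              · exact G.P_big hbig u
              · by_cases hc1 : min (k + ℓ - 2) n < h
                · exact G.P_span_zero (min_le_right _ _) hc1 hu_kl
                · have hhn : h = n := by omega
                  subst hhn
                  exact G.P_span_zero (by omega) (by omega) hu_n1
            rw [hP0, zero_smul]
            exact Submodule.zero_mem _
        · refine Submodule.smul_mem _ _ (subset_span ⟨2, ⟨le_refl 2, by omega⟩, rfl⟩)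

/-- Brackets of basis vectors with indices in `[2, C]`. -/
lemma pair2 (hα1 : G.α 1 = 0) {C W : ℕ} (hC : C ≤ n)
    (hW : min (2 * C - 1 - G.z1 - G.z2) n ≤ W) :
    ∀ a b, 2 ≤ a → a ≤ C → 2 ≤ b → b ≤ C →
      ⁅G.e a, G.e b⁆ ∈ span ℂ (G.e '' Set.Icc 2 W) := by
  obtain ⟨hz1, hz12, hz2n, hn2z⟩ := G.hz
  have core : ∀ a b, 2 ≤ a → a < b → b ≤ C →
      ⁅G.e a, G.e b⁆ ∈ span ℂ (G.e '' Set.Icc 2 W) := by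
    intro a b ha hab hb
    by_cases h0 : a < G.z1 ∨ b ≤ G.z2
    · rw [G.law0 a b ha hab (by omega) h0]
      exact Submodule.zero_mem _
    · push_neg at h0
      obtain ⟨h0a, h0b⟩ := h0
      have hae : a = G.z1 + (a - G.z1) := by omega
      have hbe : b = G.z2 + (b - G.z2) := by omega
      rw [hae, hbe]
      refine G.span_Icc_mono ?_ (G.key hα1 ((a - G.z1) + (b - G.z2)) _ _ (le_refl _)
        (by omega) (by omega) (by omega))
      omega
  intro a b ha haC hb hbC
  rcases lt_trichotomy a b with h | h | h
  · exact core a b ha h hbC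
  · subst h; rw [lie_self]; exact Submodule.zero_mem _
  · rw [← lie_skew]
    exact Submodule.neg_mem _ (core b a hb h haC)

/-- Variant with the strengthened bound, under `α₂ = γ₁ = 0`. -/
lemma pair2₀ (hα1 : G.α 1 = 0) (hα2 : G.α 2 = 0) (hγ1 : G.γ 1 = 0) {C W : ℕ} (hC : C ≤ n)
    (hW : min (2 * C - 2 - G.z1 - G.z2) n ≤ W) :
    ∀ a b, 2 ≤ a → a ≤ C → 2 ≤ b → b ≤ C →
      ⁅G.e a, G.e b⁆ ∈ span ℂ (G.e '' Set.Icc 2 W) := by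
  obtain ⟨hz1, hz12, hz2n, hn2z⟩ := G.hz
  have core : ∀ a b, 2 ≤ a → a < b → b ≤ C →
      ⁅G.e a, G.e b⁆ ∈ span ℂ (G.e '' Set.Icc 2 W) := by
    intro a b ha hab hb
    by_cases h0 : a < G.z1 ∨ b ≤ G.z2
    · rw [G.law0 a b ha hab (by omega) h0]
      exact Submodule.zero_mem _
    · push_neg at h0
      obtain ⟨h0a, h0b⟩ := h0
      have hae : a = G.z1 + (a - G.z1) := by omega
      have hbe : b = G.z2 + (b - G.z2) := by omega
      rw [hae, hbe]
      refine G.span_Icc_mono ?_ (G.key0 hα1 hα2 hγ1 ((a - G.z1) + (b - G.z2)) _ _ (le_refl _)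
        (by omega) (by omega) (by omega))
      omega
  intro a b ha haC hb hbC
  rcases lt_trichotomy a b with h | h | h
  · exact core a b ha h hbC
  · subst h; rw [lie_self]; exact Submodule.zero_mem _
  · rw [← lie_skew]
    exact Submodule.neg_mem _ (core b a hb h haC)

/-- All brackets of basis vectors, including `e_1`. -/
lemma pair_full {W : ℕ} (hW1 : n - 1 ≤ W)
    (hpair : ∀ a b, 2 ≤ a → a ≤ n → 2 ≤ b → b ≤ n →
      ⁅G.e a, G.e b⁆ ∈ span ℂ (G.e '' Set.Icc 2 W)) :
    ∀ a b, 1 ≤ a → a ≤ n → 1 ≤ b → b ≤ n →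
      ⁅G.e a, G.e b⁆ ∈ span ℂ (G.e '' Set.Icc 2 W) := by
  have h5 := G.hn5
  have he1 : ∀ b, 1 ≤ b → b ≤ n → ⁅G.e 1, G.e b⁆ ∈ span ℂ (G.e '' Set.Icc 2 W) := by
    intro b hb1 hbn
    rcases (show b = 1 ∨ b = 2 ∨ 3 ≤ b by omega) with rfl | rfl | h3
    · rw [lie_self]; exact Submodule.zero_mem _
    · rw [← lie_skew, G.adapted2 1 (le_refl 1) (by omega), neg_zero]
      exact Submodule.zero_mem _
    · rw [G.adapted1 b h3 hbn]
      exact subset_span ⟨b - 1, ⟨by omega, by omega⟩, rfl⟩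
  intro a b ha1 han hb1 hbn
  rcases (show a = 1 ∨ 2 ≤ a by omega) with rfl | ha2
  · exact he1 b hb1 hbn
  rcases (show b = 1 ∨ 2 ≤ b by omega) with rfl | hb2
  · rw [← lie_skew]
    exact Submodule.neg_mem _ (he1 a ha1 han)
  · exact hpair a b ha2 han hb2 hbn

lemma lieIdeal_bracket_le (I J : LieIdeal ℂ L) (V : Submodule ℂ L)
    (h : ∀ x ∈ I, ∀ y ∈ J, ⁅x, y⁆ ∈ V) :
    ((⁅I, J⁆ : LieIdeal ℂ L) : Submodule ℂ L) ≤ V := by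
  rw [LieIdeal.toLieSubalgebra_toSubmodule, LieSubmodule.lieIdeal_oper_eq_linear_span']
  rw [Submodule.span_le]
  rintro _ ⟨x, hx, y, hy, rfl⟩
  exact h x hx y hy

/-- `D¹ ⊆ span(e₂, …, e_W)`. -/
lemma D1_le {W : ℕ} (hW1 : n - 1 ≤ W)
    (hpair : ∀ a b, 2 ≤ a → a ≤ n → 2 ≤ b → b ≤ n →
      ⁅G.e a, G.e b⁆ ∈ span ℂ (G.e '' Set.Icc 2 W)) :
    (LieAlgebra.derivedSeries ℂ L 1 : Submodule ℂ L) ≤ span ℂ (G.e '' Set.Icc 2 W) := by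
  have h1 : LieAlgebra.derivedSeries ℂ L 1 = ⁅(⊤ : LieIdeal ℂ L), (⊤ : LieIdeal ℂ L)⁆ := by
    have := LieAlgebra.derivedSeriesOfIdeal_succ ℂ L ⊤ 0
    simpa using this
  rw [h1]
  refine lieIdeal_bracket_le _ _ _ ?_
  intro x _ y _
  have hsp : ∀ z : L, z ∈ span ℂ (Set.range G.b) := by
    intro z; rw [G.b.span_eq]; trivial
  refine lie_mem_span₂ _ _ _ ?_ x (hsp x) y (hsp y)
  rintro _ ⟨i, rfl⟩ _ ⟨j, rfl⟩
  rw [← G.he i, ← G.he j]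
  exact G.pair_full hW1 hpair (i.1 + 1) (j.1 + 1) (by omega) (by omega) (by omega) (by omega)

/-- `D² ⊆ span(e₂, …, e_{W2})` given `D¹ ⊆ span(e₂, …, e_{W1})`. -/
lemma D2_le {W1 W2 : ℕ}
    (hD1 : (LieAlgebra.derivedSeries ℂ L 1 : Submodule ℂ L) ≤ span ℂ (G.e '' Set.Icc 2 W1))
    (hpair : ∀ a b, 2 ≤ a → a ≤ W1 → 2 ≤ b → b ≤ W1 →
      ⁅G.e a, G.e b⁆ ∈ span ℂ (G.e '' Set.Icc 2 W2)) :
    (LieAlgebra.derivedSeries ℂ L 2 : Submodule ℂ L) ≤ span ℂ (G.e '' Set.Icc 2 W2) := by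
  have h1 : LieAlgebra.derivedSeries ℂ L 2
      = ⁅LieAlgebra.derivedSeries ℂ L 1, LieAlgebra.derivedSeries ℂ L 1⁆ :=
    LieAlgebra.derivedSeriesOfIdeal_succ ℂ L ⊤ 1
  rw [h1]
  refine lieIdeal_bracket_le _ _ _ ?_
  intro x hx y hy
  have hx' : x ∈ span ℂ (G.e '' Set.Icc 2 W1) := hD1 hx
  have hy' : y ∈ span ℂ (G.e '' Set.Icc 2 W1) := hD1 hy
  refine lie_mem_span₂ _ _ _ ?_ x hx' y hy'
  rintro _ ⟨a, ha, rfl⟩ _ ⟨b, hb, rfl⟩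
  simp only [Set.mem_Icc] at ha hb
  exact hpair a b ha.1 ha.2 hb.1 hb.2

/-- If `D² ⊆ span(e₂, …, e_Q)` with `Q ≤ z₂` then `D³ = 0`. -/
lemma D3_bot {Q : ℕ} (hQ : Q ≤ G.z2)
    (hD2 : (LieAlgebra.derivedSeries ℂ L 2 : Submodule ℂ L) ≤ span ℂ (G.e '' Set.Icc 2 Q)) :
    LieAlgebra.derivedSeries ℂ L 3 = ⊥ := by
  obtain ⟨hz1, hz12, hz2n, hn2z⟩ := G.hz
  have h1 : LieAlgebra.derivedSeries ℂ L 3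
      = ⁅LieAlgebra.derivedSeries ℂ L 2, LieAlgebra.derivedSeries ℂ L 2⁆ :=
    LieAlgebra.derivedSeriesOfIdeal_succ ℂ L ⊤ 2
  have hsub : (LieAlgebra.derivedSeries ℂ L 3 : Submodule ℂ L) ≤ ⊥ := by
    rw [h1]
    refine lieIdeal_bracket_le _ _ _ ?_
    intro x hx y hy
    refine lie_mem_span₂ _ _ _ ?_ x (hD2 hx) y (hD2 hy)
    rintro _ ⟨a, ha, rfl⟩ _ ⟨b, hb, rfl⟩
    simp only [Set.mem_Icc] at ha hb
    have core : ∀ a b, 2 ≤ a → a < b → b ≤ Q → ⁅G.e a, G.e b⁆ = 0 := by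
      intro a b ha' hab hb'
      exact G.law0 a b ha' hab (by omega) (Or.inr (by omega))
    have hz : ⁅G.e a, G.e b⁆ = 0 := by
      rcases lt_trichotomy a b with h | h | h
      · exact core a b ha.1 h hb.2
      · subst h; exact lie_self _
      · rw [← lie_skew, core b a hb.1 h ha.2, neg_zero]
    rw [hz]
    exact Submodule.zero_mem _
  ext x
  simp only [LieSubmodule.mem_bot]
  constructor
  · intro hx
    simpa using hsub hx
  · rintro rfl
    exact (LieAlgebra.derivedSeries ℂ L 3).zero_mem

end GeneralLaw
namespace GeneralLaw

open Submodule Set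

variable {n : ℕ} {L : Type*} [LieRing L] [LieAlgebra ℂ L] (G : GeneralLaw n L)

/-- Top coefficient of the bracket `⁅e_{z1+k}, e_{z2+ℓ}⁆`. -/
noncomputable def tau (k ℓ : ℕ) : ℂ :=
  G.toAdaptedBasis.P (k + ℓ) ⁅G.e (G.z1 + k), G.e (G.z2 + ℓ)⁆

lemma tauA {k : ℕ} (hk1 : 1 ≤ k) (hk : k ≤ G.z2 - G.z1) : G.tau k 1 = G.α 2 := by
  obtain ⟨hz1, hz12, hz2n, hn2z⟩ := G.hz
  unfold tau
  rw [G.lawA k hk, G.P_sum]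
  have hcong : ∀ t ∈ Finset.range (k + 1),
      G.toAdaptedBasis.P (k + 1) (G.α (t + 1) • G.e (k + 2 - t))
        = if t = 1 then G.α 2 else 0 := by
    intro t ht
    simp only [Finset.mem_range] at ht
    rw [G.P_smul, G.P_basis (by omega) (by omega) (by omega) (by omega)]
    by_cases h1 : t = 1
    · subst h1
      rw [if_pos (by omega), if_pos rfl, mul_one]
    · rw [if_neg (by omega), mul_zero, if_neg h1]
  rw [Finset.sum_congr rfl hcong, Finset.sum_ite_eq' (Finset.range (k + 1)) 1 (fun _ => G.α 2),
    if_pos (by simp; omega)]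

lemma tauB {ℓ : ℕ} (hℓ2 : 2 ≤ ℓ) (hℓn : ℓ ≤ n - G.z2) : G.tau 0 ℓ = G.γ 1 := by
  obtain ⟨hz1, hz12, hz2n, hn2z⟩ := G.hz
  unfold tau
  rw [show G.z1 + 0 = G.z1 from rfl, G.lawB ℓ hℓ2 hℓn, show (0 : ℕ) + ℓ = ℓ from by omega,
    G.P_add, G.P_smul, G.P_sum]
  rw [G.P_basis (by omega) (by omega) (by omega) (by omega), if_neg (by omega), mul_zero, zero_add]
  have hcong : ∀ t ∈ Finset.range (ℓ - 1),
      G.toAdaptedBasis.P ℓ (G.γ (t + 1) • G.e (ℓ - t)) = if t = 0 then G.γ 1 else 0 := by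
    intro t ht
    simp only [Finset.mem_range] at ht
    rw [G.P_smul, G.P_basis (by omega) (by omega) (by omega) (by omega)]
    by_cases h1 : t = 0
    · subst h1
      rw [if_pos (by omega), if_pos rfl, mul_one]
    · rw [if_neg (by omega), mul_zero, if_neg h1]
  rw [Finset.sum_congr rfl hcong, Finset.sum_ite_eq' (Finset.range (ℓ - 1)) 0 (fun _ => G.γ 1),
    if_pos (by simp; omega)]

lemma tauC {k ℓ : ℕ} (hk1 : 1 ≤ k) (hk : k ≤ G.z2 - G.z1 + 1) (hℓ2 : 2 ≤ ℓ)
    (hℓn : ℓ ≤ n - G.z2) : G.tau k ℓ = G.tau (k - 1) ℓ + G.tau k (ℓ - 1) := by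
  obtain ⟨hz1, hz12, hz2n, hn2z⟩ := G.hz
  have hkC : k < G.z2 - G.z1 + ℓ := by omega
  have hkln : k + ℓ + 1 ≤ n := by omega
  unfold tau
  rw [G.lawC k ℓ hℓ2 hℓn hk1 hkC, G.P_add, G.P_sum, G.P_smul,
    G.P_basis (by omega) (by omega) (by omega) (by omega), if_neg (by omega), mul_zero, add_zero]
  have hcong : ∀ h ∈ Finset.Icc 2 (k + ℓ),
      G.toAdaptedBasis.P (k + ℓ)
        ((G.toAdaptedBasis.P h
            (⁅G.e (G.z1 + k - 1), G.e (G.z2 + ℓ)⁆ + ⁅G.e (G.z1 + k), G.e (G.z2 + ℓ - 1)⁆))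
          • G.e (h + 1))
        = if h = k + ℓ - 1 then
            G.toAdaptedBasis.P (k + ℓ - 1)
              (⁅G.e (G.z1 + k - 1), G.e (G.z2 + ℓ)⁆ + ⁅G.e (G.z1 + k), G.e (G.z2 + ℓ - 1)⁆)
          else 0 := by
    intro h hh
    simp only [Finset.mem_Icc] at hh
    rw [G.P_smul, G.P_basis (by omega) (by omega) (by omega) (by omega)]
    by_cases h1 : h = k + ℓ - 1
    · subst h1
      rw [if_pos (by omega), mul_one, if_pos rfl]
    · rw [if_neg (by omega), mul_zero, if_neg h1]
  rw [Finset.sum_congr rfl hcong,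
    Finset.sum_ite_eq' (Finset.Icc 2 (k + ℓ)) (k + ℓ - 1) _, if_pos (by simp; omega)]
  rw [G.P_add]
  congr 1
  · rw [show G.z1 + k - 1 = G.z1 + (k - 1) from by omega, show k + ℓ - 1 = (k - 1) + ℓ from by omega]
  · rw [show G.z2 + ℓ - 1 = G.z2 + (ℓ - 1) from by omega, show k + ℓ - 1 = k + (ℓ - 1) from by omega]

lemma tau_corner (hB1 : G.z1 + G.z2 + 1 = n) : G.tau (G.z2 - G.z1 + 1) 1 = 0 := by
  obtain ⟨hz1, hz12, hz2n, hn2z⟩ := G.hz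
  unfold tau
  rw [show G.z1 + (G.z2 - G.z1 + 1) = G.z2 + 1 from by omega, lie_self, G.P_zero]

lemma tauVAL (hB1 : G.z1 + G.z2 + 1 = n) :
    ∀ N k m, k + m ≤ N → k ≤ G.z2 - G.z1 → m ≤ G.z1 → 1 ≤ k + m →
      G.tau k (m + 1) = ((k + m - 1).choose m : ℂ) * G.α 2
        + ((k + m - 1).choose k : ℂ) * G.γ 1 := by
  obtain ⟨hz1, hz12, hz2n, hn2z⟩ := G.hz
  intro N
  induction N with
  | zero => intro k m h1 _ _ h2; omega
  | succ N ih =>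
    intro k m hN hkS hmz hkm1
    rcases Nat.eq_zero_or_pos m with hm0 | hm1
    · subst hm0
      rw [G.tauA (by omega) hkS]
      rw [show k + 0 - 1 = k - 1 from rfl, Nat.choose_zero_right,
        Nat.choose_eq_zero_of_lt (by omega)]
      push_cast
      ring
    · rcases Nat.eq_zero_or_pos k with hk0 | hk1
      · subst hk0
        rw [G.tauB (by omega) (by omega)]
        rw [show 0 + m - 1 = m - 1 from by omega, Nat.choose_zero_right,
          Nat.choose_eq_zero_of_lt (by omega)]
        push_cast
        ring
      · obtain ⟨k', rfl⟩ : ∃ k', k = k' + 1 := ⟨k - 1, by omega⟩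
        obtain ⟨m', rfl⟩ : ∃ m', m = m' + 1 := ⟨m - 1, by omega⟩
        rw [G.tauC (by omega) (by omega) (by omega) (by omega)]
        rw [show k' + 1 - 1 = k' from rfl, show m' + 1 + 1 - 1 = m' + 1 from rfl]
        rw [ih k' (m' + 1) (by omega) (by omega) (by omega) (by omega)]
        rw [show G.tau (k' + 1) (m' + 1) = G.tau (k' + 1) (m' + 1) from rfl,
          ih (k' + 1) m' (by omega) (by omega) (by omega) (by omega)]
        rw [show k' + (m' + 1) - 1 = k' + m' from by omega,
          show k' + 1 + m' - 1 = k' + m' from by omega,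
          show k' + 1 + (m' + 1) - 1 = k' + m' + 1 from by omega]
        have hp1 : (k' + m' + 1).choose (m' + 1) = (k' + m').choose m' + (k' + m').choose (m' + 1) :=
          Nat.choose_succ_succ _ _
        have hp2 : (k' + m' + 1).choose (k' + 1) = (k' + m').choose k' + (k' + m').choose (k' + 1) :=
          Nat.choose_succ_succ _ _
        rw [hp1, hp2]
        push_cast
        ring

lemma tauTOP (hB1 : G.z1 + G.z2 + 1 = n) :
    ∀ m, 1 ≤ m → m ≤ G.z1 →
      G.tau (G.z2 - G.z1 + 1) (m + 1)
        = (((G.z2 - G.z1 + m).choose m : ℂ) - 1) * G.α 2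
          + ((G.z2 - G.z1 + m).choose (G.z2 - G.z1 + 1) : ℂ) * G.γ 1 := by
  obtain ⟨hz1, hz12, hz2n, hn2z⟩ := G.hz
  intro m
  induction m with
  | zero => intro h _; omega
  | succ m ihm =>
    intro _ hmz
    rcases Nat.eq_zero_or_pos m with hm0 | hm1
    · subst hm0
      rw [G.tauC (by omega) (by omega) (by omega) (by omega)]
      rw [show G.z2 - G.z1 + 1 - 1 = G.z2 - G.z1 from rfl, show (1 : ℕ) + 1 - 1 = 1 from rfl]
      rw [G.tauVAL hB1 (G.z2 - G.z1 + 1) (G.z2 - G.z1) 1 (by omega) (by omega) (by omega) (by omega)]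
      rw [G.tau_corner hB1, add_zero]
      rw [show G.z2 - G.z1 + 1 - 1 = G.z2 - G.z1 from rfl, Nat.choose_one_right, Nat.choose_self]
      rw [show G.z2 - G.z1 + (0 + 1) = G.z2 - G.z1 + 1 from rfl, show (0 : ℕ) + 1 = 1 from rfl,
        Nat.choose_one_right, Nat.choose_self]
      push_cast
      ring
    · rw [G.tauC (by omega) (by omega) (by omega) (by omega)]
      rw [show G.z2 - G.z1 + 1 - 1 = G.z2 - G.z1 from rfl, show m + 1 + 1 - 1 = m + 1 from rfl]
      rw [G.tauVAL hB1 (G.z2 - G.z1 + (m + 1)) (G.z2 - G.z1) (m + 1) (by omega) (by omega)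
        (by omega) (by omega)]
      rw [ihm (by omega) (by omega)]
      rw [show G.z2 - G.z1 + (m + 1) - 1 = G.z2 - G.z1 + m from by omega]
      have hp1 : (G.z2 - G.z1 + (m + 1)).choose (m + 1)
          = (G.z2 - G.z1 + m).choose m + (G.z2 - G.z1 + m).choose (m + 1) := by
        rw [show G.z2 - G.z1 + (m + 1) = (G.z2 - G.z1 + m) + 1 from by omega]
        exact Nat.choose_succ_succ _ _
      have hp2 : (G.z2 - G.z1 + (m + 1)).choose (G.z2 - G.z1 + 1)
          = (G.z2 - G.z1 + m).choose (G.z2 - G.z1) + (G.z2 - G.z1 + m).choose (G.z2 - G.z1 + 1) := by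
        rw [show G.z2 - G.z1 + (m + 1) = (G.z2 - G.z1 + m) + 1 from by omega]
        exact Nat.choose_succ_succ _ _
      rw [hp1, hp2]
      push_cast
      ring

end GeneralLaw
namespace GeneralLaw

open Submodule Set

variable {n : ℕ} {L : Type*} [LieRing L] [LieAlgebra ℂ L] (G : GeneralLaw n L)

lemma lie_expand (x w : L) :
    ⁅x, w⁆ = ∑ m ∈ Finset.Icc 1 n, G.toAdaptedBasis.P m w • ⁅x, G.e m⁆ := by
  conv_lhs => rw [← G.repr_total w]
  rw [lie_sum']
  exact Finset.sum_congr rfl fun m _ => lie_smul _ _ _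

lemma e2_ne_zero : G.e 2 ≠ 0 := by
  have h5 := G.hn5
  have h := G.he ⟨1, by omega⟩
  rw [show (1 : ℕ) + 1 = 2 from rfl] at h
  rw [h]
  exact G.b.ne_zero _

lemma lawA1 (hα1 : G.α 1 = 0) (hS1 : 1 ≤ G.z2 - G.z1) :
    ⁅G.e (G.z1 + 1), G.e (G.z2 + 1)⁆ = G.α 2 • G.e 2 := by
  have h := G.lawA 1 hS1
  rw [Finset.sum_range_succ, Finset.sum_range_one] at h
  norm_num at h
  rw [h, hα1, zero_smul, zero_add]

lemma lawA0 (hα1 : G.α 1 = 0) :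
    ⁅G.e G.z1, G.e (G.z2 + 1)⁆ = 0 := by
  have h := G.lawA 0 (by omega)
  rw [Finset.sum_range_one] at h
  norm_num at h
  rw [h, hα1, zero_smul]

lemma lawB2 (hα1 : G.α 1 = 0) (h2 : 2 ≤ n - G.z2) :
    ⁅G.e G.z1, G.e (G.z2 + 2)⁆ = G.γ 1 • G.e 2 := by
  have h := G.lawB 2 le_rfl h2
  rw [Finset.sum_range_one] at h
  norm_num at h
  rw [h, hα1, zero_smul, zero_add]

lemma relR2 (hα1 : G.α 1 = 0) (hB1 : G.z1 + G.z2 + 1 = n) :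
    G.α 2 * G.tau (G.z2 - G.z1) (G.z1 + 1) = 0 := by
  obtain ⟨hz1, hz12, hz2n, hn2z⟩ := G.hz
  have hS3 : G.z1 + 3 ≤ G.z2 := by omega
  have hY : ⁅G.e G.z2, G.e n⁆ ∈ span ℂ (G.e '' Set.Icc 2 (G.z2 + 1)) := by
    have h := G.key hα1 (G.z2 - G.z1 + (G.z1 + 1)) (G.z2 - G.z1) (G.z1 + 1) le_rfl (by omega)
      (by omega) (by omega)
    rw [show G.z1 + (G.z2 - G.z1) = G.z2 from by omega, show G.z2 + (G.z1 + 1) = n from by omega,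
      show min (G.z2 - G.z1 + (G.z1 + 1)) n = G.z2 + 1 from by omega] at h
    exact h
  have htau : G.tau (G.z2 - G.z1) (G.z1 + 1)
      = G.toAdaptedBasis.P (G.z2 + 1) ⁅G.e G.z2, G.e n⁆ := by
    unfold tau
    rw [show G.z1 + (G.z2 - G.z1) = G.z2 from by omega, show G.z2 + (G.z1 + 1) = n from by omega,
      show G.z2 - G.z1 + (G.z1 + 1) = G.z2 + 1 from by omega]
  have hZ : ⁅G.e (G.z1 + 1), G.e n⁆ ∈ span ℂ (G.e '' Set.Icc 2 (G.z1 + 2)) := by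
    have h := G.key hα1 (1 + (G.z1 + 1)) 1 (G.z1 + 1) le_rfl (by omega) (by omega) (by omega)
    rw [show G.z2 + (G.z1 + 1) = n from by omega,
      show min (1 + (G.z1 + 1)) n = G.z1 + 2 from by omega] at h
    exact h
  have hZ0 : ⁅G.e G.z2, ⁅G.e (G.z1 + 1), G.e n⁆⁆ = 0 := by
    refine lie_span_zero _ _ ?_ _ hZ
    rintro _ ⟨m, hm, rfl⟩
    simp only [Set.mem_Icc] at hm
    rw [← lie_skew, G.law0 m G.z2 (by omega) (by omega) (by omega) (Or.inr le_rfl), neg_zero]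
  have hjac := leibniz_lie (G.e (G.z1 + 1)) (G.e G.z2) (G.e n)
  rw [G.law0 (G.z1 + 1) G.z2 (by omega) (by omega) (by omega) (Or.inr le_rfl), zero_lie, hZ0,
    add_zero] at hjac
  rw [G.lie_expand (G.e (G.z1 + 1)) ⁅G.e G.z2, G.e n⁆] at hjac
  have hsum : ∑ m ∈ Finset.Icc 1 n,
        G.toAdaptedBasis.P m ⁅G.e G.z2, G.e n⁆ • ⁅G.e (G.z1 + 1), G.e m⁆
      = (G.toAdaptedBasis.P (G.z2 + 1) ⁅G.e G.z2, G.e n⁆ * G.α 2) • G.e 2 := by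
    rw [Finset.sum_eq_single_of_mem (G.z2 + 1) (by simp only [Finset.mem_Icc]; omega) ?_]
    · rw [G.lawA1 hα1 (by omega), smul_smul]
    · intro m hm hne
      simp only [Finset.mem_Icc] at hm
      rcases (show m = 1 ∨ (2 ≤ m ∧ m ≤ G.z2) ∨ G.z2 + 2 ≤ m by omega) with rfl | hmid | hbig
      · rw [G.P_one_zero (by omega) hY, zero_smul]
      · rcases (show m < G.z1 + 1 ∨ m = G.z1 + 1 ∨ G.z1 + 1 < m by omega) with h | h | h
        · have hbz : ⁅G.e (G.z1 + 1), G.e m⁆ = 0 := by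
            rw [← lie_skew, G.law0 m (G.z1 + 1) (by omega) (by omega) (by omega)
              (Or.inr (by omega)), neg_zero]
          rw [hbz, smul_zero]
        · subst h; rw [lie_self, smul_zero]
        · rw [G.law0 (G.z1 + 1) m (by omega) (by omega) (by omega) (Or.inr (by omega)), smul_zero]
      · rw [G.P_span_zero (by omega) (by omega) hY, zero_smul]
  rw [hsum] at hjac
  have := (smul_eq_zero.mp hjac).resolve_right G.e2_ne_zero
  rw [htau]
  rw [mul_comm]
  exact this

lemma relT1 (hα1 : G.α 1 = 0) (hB1 : G.z1 + G.z2 + 1 = n) :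
    G.γ 1 * (G.tau (G.z2 - G.z1 + 1) (G.z1 + 1) + G.α 2) = 0 := by
  obtain ⟨hz1, hz12, hz2n, hn2z⟩ := G.hz
  have hS3 : G.z1 + 3 ≤ G.z2 := by omega
  have hX : ⁅G.e (G.z2 + 1), G.e n⁆ ∈ span ℂ (G.e '' Set.Icc 2 (G.z2 + 2)) := by
    have h := G.key hα1 ((G.z2 - G.z1 + 1) + (G.z1 + 1)) (G.z2 - G.z1 + 1) (G.z1 + 1) le_rfl
      (by omega) (by omega) (by omega)
    rw [show G.z1 + (G.z2 - G.z1 + 1) = G.z2 + 1 from by omega,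
      show G.z2 + (G.z1 + 1) = n from by omega,
      show min ((G.z2 - G.z1 + 1) + (G.z1 + 1)) n = G.z2 + 2 from by omega] at h
    exact h
  have htau : G.tau (G.z2 - G.z1 + 1) (G.z1 + 1)
      = G.toAdaptedBasis.P (G.z2 + 2) ⁅G.e (G.z2 + 1), G.e n⁆ := by
    unfold tau
    rw [show G.z1 + (G.z2 - G.z1 + 1) = G.z2 + 1 from by omega,
      show G.z2 + (G.z1 + 1) = n from by omega,
      show G.z2 - G.z1 + 1 + (G.z1 + 1) = G.z2 + 2 from by omega]
  have hBn : ⁅G.e G.z1, G.e n⁆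
      = ∑ t ∈ Finset.range G.z1, G.γ (t + 1) • G.e (G.z1 + 1 - t) := by
    have h := G.lawB (G.z1 + 1) (by omega) (by omega)
    rw [show G.z2 + (G.z1 + 1) = n from by omega, hα1, zero_smul, zero_add,
      show G.z1 + 1 - 1 = G.z1 from rfl] at h
    exact h
  have hsecond : ⁅G.e (G.z2 + 1), ⁅G.e G.z1, G.e n⁆⁆ = G.γ 1 • -(G.α 2 • G.e 2) := by
    rw [hBn, lie_sum']
    rw [Finset.sum_eq_single_of_mem 0 (by simp; omega) ?_]
    · rw [lie_smul]
      congr 1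
      rw [show G.z1 + 1 - 0 = G.z1 + 1 from rfl, ← lie_skew, G.lawA1 hα1 (by omega)]
    · intro t ht htne
      simp only [Finset.mem_range] at ht
      rw [lie_smul]
      rcases (show t = 1 ∨ 2 ≤ t by omega) with rfl | ht2
      · rw [show G.z1 + 1 - 1 = G.z1 from rfl, ← lie_skew, G.lawA0 hα1, neg_zero, smul_zero]
      · rw [← lie_skew, G.law0 (G.z1 + 1 - t) (G.z2 + 1) (by omega) (by omega) (by omega)
          (Or.inl (by omega)), neg_zero, smul_zero]
  have hfirst : ⁅⁅G.e G.z1, G.e (G.z2 + 1)⁆, G.e n⁆ = 0 := by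
    rw [G.lawA0 hα1, zero_lie]
  have hjac := leibniz_lie (G.e G.z1) (G.e (G.z2 + 1)) (G.e n)
  rw [hfirst, zero_add, hsecond] at hjac
  rw [G.lie_expand (G.e G.z1) ⁅G.e (G.z2 + 1), G.e n⁆] at hjac
  have hsum : ∑ m ∈ Finset.Icc 1 n,
        G.toAdaptedBasis.P m ⁅G.e (G.z2 + 1), G.e n⁆ • ⁅G.e G.z1, G.e m⁆
      = (G.toAdaptedBasis.P (G.z2 + 2) ⁅G.e (G.z2 + 1), G.e n⁆ * G.γ 1) • G.e 2 := by
    rw [Finset.sum_eq_single_of_mem (G.z2 + 2) (by simp only [Finset.mem_Icc]; omega) ?_]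
    · rw [G.lawB2 hα1 (by omega), smul_smul]
    · intro m hm hne
      simp only [Finset.mem_Icc] at hm
      rcases (show m = 1 ∨ (2 ≤ m ∧ m ≤ G.z2) ∨ m = G.z2 + 1 ∨ G.z2 + 3 ≤ m by omega)
        with rfl | hmid | rfl | hbig
      · rw [G.P_one_zero (by omega) hX, zero_smul]
      · rcases (show m < G.z1 ∨ m = G.z1 ∨ G.z1 < m by omega) with h | h | h
        · have hbz : ⁅G.e G.z1, G.e m⁆ = 0 := by
            rw [← lie_skew, G.law0 m G.z1 (by omega) (by omega) (by omega)
              (Or.inr (by omega)), neg_zero]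
          rw [hbz, smul_zero]
        · subst h; rw [lie_self, smul_zero]
        · rw [G.law0 G.z1 m (by omega) (by omega) (by omega) (Or.inr (by omega)), smul_zero]
      · rw [G.lawA0 hα1, smul_zero]
      · rw [G.P_span_zero (by omega) (by omega) hX, zero_smul]
  rw [hsum] at hjac
  -- hjac : (P * γ1) • e 2 = γ 1 • -(α 2 • e 2)
  have hco : (G.toAdaptedBasis.P (G.z2 + 2) ⁅G.e (G.z2 + 1), G.e n⁆ * G.γ 1
      + G.γ 1 * G.α 2) • G.e 2 = 0 := by
    rw [add_smul, hjac]
    rw [smul_neg, smul_smul]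
    abel
  have := (smul_eq_zero.mp hco).resolve_right G.e2_ne_zero
  rw [htau]
  ring_nf
  ring_nf at this
  linear_combination this

end GeneralLaw
lemma choose_det_aux {z1 z2 : ℕ} (h4 : 4 ≤ z1) (h3 : z1 + 3 ≤ z2) :
    (z2 - 1).choose z1 * z2.choose (z1 - 1) < z2.choose z1 * (z2 - 1).choose (z1 - 1) := by
  obtain ⟨m, rfl⟩ : ∃ m, z2 = m + 1 := ⟨z2 - 1, by omega⟩
  rw [Nat.add_sub_cancel]
  obtain ⟨j2, rfl⟩ : ∃ j2, z1 = j2 + 2 := ⟨z1 - 2, by omega⟩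
  rw [show j2 + 2 - 1 = j2 + 1 from rfl]
  rw [show (m + 1).choose (j2 + 1) = m.choose j2 + m.choose (j2 + 1) from Nat.choose_succ_succ m j2,
    show (m + 1).choose (j2 + 2) = m.choose (j2 + 1) + m.choose (j2 + 2) from
      Nat.choose_succ_succ m (j2 + 1)]
  set A := m.choose (j2 + 2) with hA
  set B := m.choose (j2 + 1) with hB
  set Cc := m.choose j2 with hC
  have hkey : A * Cc < B * B := by
    have hI1 : A * (j2 + 2) = B * (m - (j2 + 1)) := Nat.choose_succ_right_eq m (j2 + 1)
    have hI2 : B * (j2 + 1) = Cc * (m - j2) := Nat.choose_succ_right_eq m j2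
    have hBpos : 0 < B := Nat.choose_pos (by omega)
    obtain ⟨p, hp⟩ : ∃ p, m - j2 = p + 2 := ⟨m - j2 - 2, by omega⟩
    have hp1 : m - (j2 + 1) = p + 1 := by omega
    rw [hp1] at hI1
    rw [hp] at hI2
    have hfac : (p + 1) * (j2 + 1) < (j2 + 2) * (p + 2) := by nlinarith
    have h1 : (A * Cc) * ((j2 + 2) * (p + 2)) = (B * B) * ((p + 1) * (j2 + 1)) := by
      calc (A * Cc) * ((j2 + 2) * (p + 2)) = (A * (j2 + 2)) * (Cc * (p + 2)) := by ring
        _ = (B * (p + 1)) * (B * (j2 + 1)) := by rw [hI1, ← hI2]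
        _ = (B * B) * ((p + 1) * (j2 + 1)) := by ring
    by_contra hcon
    push_neg at hcon
    have hgt : (B * B) * ((p + 1) * (j2 + 1)) < (B * B) * ((j2 + 2) * (p + 2)) := by
      have hbb : 0 < B * B := by positivity
      exact Nat.mul_lt_mul_of_pos_left hfac hbb
    nlinarith [Nat.mul_le_mul_right ((j2 + 2) * (p + 2)) hcon]
  calc A * (Cc + B) = A * Cc + A * B := by ring
    _ < B * B + A * B := by omega
    _ = (B + A) * B := by ring

namespace GeneralLaw

open Submodule Set

variable {n : ℕ} {L : Type*} [LieRing L] [LieAlgebra ℂ L] (G : GeneralLaw n L)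

lemma alpha2_gamma1_zero (hα1 : G.α 1 = 0) (hB1 : G.z1 + G.z2 + 1 = n) :
    G.α 2 = 0 ∧ G.γ 1 = 0 := by
  obtain ⟨hz1, hz12, hz2n, hn2z⟩ := G.hz
  have hS3 : G.z1 + 3 ≤ G.z2 := by omega
  -- the two tau values
  have hval1 : G.tau (G.z2 - G.z1) (G.z1 + 1)
      = ((G.z2 - 1).choose G.z1 : ℂ) * G.α 2 + ((G.z2 - 1).choose (G.z1 - 1) : ℂ) * G.γ 1 := by
    have h := G.tauVAL hB1 (G.z2 - G.z1 + G.z1) (G.z2 - G.z1) G.z1 le_rfl le_rfl le_rfl (by omega)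
    rw [show G.z2 - G.z1 + G.z1 - 1 = G.z2 - 1 from by omega] at h
    rw [h]
    congr 3
    rw [show G.z2 - G.z1 = G.z2 - 1 - (G.z1 - 1) from by omega]
    exact Nat.choose_symm (by omega)
  have hval2 : G.tau (G.z2 - G.z1 + 1) (G.z1 + 1)
      = ((G.z2.choose G.z1 : ℂ) - 1) * G.α 2 + (G.z2.choose (G.z1 - 1) : ℂ) * G.γ 1 := by
    have h := G.tauTOP hB1 G.z1 (by omega) le_rfl
    rw [show G.z2 - G.z1 + G.z1 = G.z2 from by omega] at h
    rw [h]
    congr 3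
    rw [show G.z2 - G.z1 + 1 = G.z2 - (G.z1 - 1) from by omega]
    exact Nat.choose_symm (by omega)
  set A : ℂ := ((G.z2 - 1).choose G.z1 : ℂ) with hA
  set B : ℂ := ((G.z2 - 1).choose (G.z1 - 1) : ℂ) with hB
  set A' : ℂ := (G.z2.choose G.z1 : ℂ) with hA'
  set B' : ℂ := (G.z2.choose (G.z1 - 1) : ℂ) with hB'
  have hE1 : G.α 2 * (A * G.α 2 + B * G.γ 1) = 0 := by
    have := G.relR2 hα1 hB1
    rw [hval1] at this
    exact this
  have hE2 : G.γ 1 * (A' * G.α 2 + B' * G.γ 1) = 0 := by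
    have := G.relT1 hα1 hB1
    rw [hval2] at this
    calc G.γ 1 * (A' * G.α 2 + B' * G.γ 1)
        = G.γ 1 * ((A' - 1) * G.α 2 + B' * G.γ 1 + G.α 2) := by ring
      _ = 0 := this
  have hdet : A * B' ≠ A' * B := by
    have hlt := choose_det_aux (z1 := G.z1) (z2 := G.z2) hz1 hS3
    intro hcon
    rw [hA, hB, hA', hB'] at hcon
    have hc2 : (((G.z2 - 1).choose G.z1 * G.z2.choose (G.z1 - 1) : ℕ) : ℂ)
        = ((G.z2.choose G.z1 * (G.z2 - 1).choose (G.z1 - 1) : ℕ) : ℂ) := by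
      push_cast
      linear_combination hcon
    have hnat : (G.z2 - 1).choose G.z1 * G.z2.choose (G.z1 - 1)
        = G.z2.choose G.z1 * (G.z2 - 1).choose (G.z1 - 1) := by exact_mod_cast hc2
    omega
  have hApos : A ≠ 0 := by
    rw [hA]
    have : 0 < (G.z2 - 1).choose G.z1 := Nat.choose_pos (by omega)
    exact_mod_cast this.ne'
  have hB'pos : B' ≠ 0 := by
    rw [hB']
    have : 0 < G.z2.choose (G.z1 - 1) := Nat.choose_pos (by omega)
    exact_mod_cast this.ne'
  by_cases hα2 : G.α 2 = 0
  · refine ⟨hα2, ?_⟩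
    rw [hα2] at hE2
    have hg : G.γ 1 * (B' * G.γ 1) = 0 := by linear_combination hE2
    rcases mul_eq_zero.mp hg with h | h
    · exact h
    · rcases mul_eq_zero.mp h with h' | h'
      · exact absurd h' hB'pos
      · exact h'
  · exfalso
    have hE1' : A * G.α 2 + B * G.γ 1 = 0 := (mul_eq_zero.mp hE1).resolve_left hα2
    by_cases hγ1 : G.γ 1 = 0
    · rw [hγ1] at hE1'
      have hAz : A * G.α 2 = 0 := by linear_combination hE1'
      rcases mul_eq_zero.mp hAz with h | h
      · exact hApos h
      · exact hα2 h
    · have hE2' : A' * G.α 2 + B' * G.γ 1 = 0 := (mul_eq_zero.mp hE2).resolve_left hγ1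
      have hcomb : (A * B' - A' * B) * G.γ 1 = 0 := by
        linear_combination A * hE2' - A' * hE1'
      rcases mul_eq_zero.mp hcomb with h | h
      · exact hdet (by linear_combination h)
      · exact hγ1 h

end GeneralLaw

/-- Let `g` be an `n`-dimensional non-model filiform Lie algebra in the family `F_{αγ}`
(i.e. with general law subject to `β_{kℓ} = γ_{k+ℓ-1}` for `k + ℓ ≤ n - z_2`), with
`α_1 = 0` and `z_2 ≤ n - 3`.  Then `D^2 g ⊆ span(e_2, …, e_{2n - z_1 - z_2 - 2})`; in
particular, if `z_1 > 2(n - z_2) - 4` then `D^3 g = 0` and `g` has derived length at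
most `3`. -/
theorem derived_two_le_span
    (n : ℕ) (L : Type*) [LieRing L] [LieAlgebra ℂ L]
    (G : GeneralLaw n L)
    (hFαγ : ∀ k ℓ, 1 ≤ k → 2 ≤ ℓ → k + ℓ ≤ n - G.z2 → G.β k ℓ = G.γ (k + ℓ - 1))
    (hα1 : G.α 1 = 0) (hz2 : G.z2 ≤ n - 3) :
    (LieAlgebra.derivedSeries ℂ L 2 : Submodule ℂ L) ≤
      Submodule.span ℂ (G.e '' Set.Icc 2 (2 * n - G.z1 - G.z2 - 2)) ∧
    (2 * (n - G.z2) - 4 < G.z1 → LieAlgebra.derivedSeries ℂ L 3 = ⊥) := by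
  obtain ⟨hz1, hz12, hz2n, hn2z⟩ := G.hz
  constructor
  · -- Part 1
    by_cases hreg : n ≤ 2 * n - G.z1 - G.z2 - 2
    · -- target is large: everything is contained in span(e₂, …, e_n)
      have hD1 : (LieAlgebra.derivedSeries ℂ L 1 : Submodule ℂ L)
          ≤ Submodule.span ℂ (G.e '' Set.Icc 2 n) :=
        G.D1_le (by omega) (G.pair2 hα1 le_rfl (by omega))
      have hD2 : (LieAlgebra.derivedSeries ℂ L 2 : Submodule ℂ L)
          ≤ Submodule.span ℂ (G.e '' Set.Icc 2 n) :=
        G.D2_le hD1 (G.pair2 hα1 le_rfl (by omega))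
      exact le_trans hD2 (G.span_Icc_mono hreg)
    · by_cases hB1 : G.z1 + G.z2 + 1 = n
      · -- boundary regime: use the Jacobi-derived vanishing α₂ = γ₁ = 0
        obtain ⟨hα2, hγ1⟩ := G.alpha2_gamma1_zero hα1 hB1
        have hD1 : (LieAlgebra.derivedSeries ℂ L 1 : Submodule ℂ L)
            ≤ Submodule.span ℂ (G.e '' Set.Icc 2 (n - 1)) :=
          G.D1_le le_rfl (G.pair2₀ hα1 hα2 hγ1 le_rfl (by omega))
        have hD2 : (LieAlgebra.derivedSeries ℂ L 2 : Submodule ℂ L)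
            ≤ Submodule.span ℂ (G.e '' Set.Icc 2 (n - 1)) :=
          G.D2_le hD1 (G.pair2₀ hα1 hα2 hγ1 (by omega) (by omega))
        exact le_trans hD2 (G.span_Icc_mono (by omega))
      · -- regime `n ≤ z1 + z2`
        have hA : n ≤ G.z1 + G.z2 := by omega
        have hD1 : (LieAlgebra.derivedSeries ℂ L 1 : Submodule ℂ L)
            ≤ Submodule.span ℂ (G.e '' Set.Icc 2 (n - 1)) :=
          G.D1_le le_rfl (G.pair2 hα1 le_rfl (by omega))
        exact G.D2_le hD1 (G.pair2 hα1 (by omega) (by omega))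
  · -- Part 2
    intro hbig
    have hA : n ≤ G.z1 + G.z2 := by omega
    have hD1 : (LieAlgebra.derivedSeries ℂ L 1 : Submodule ℂ L)
        ≤ Submodule.span ℂ (G.e '' Set.Icc 2 (n - 1)) :=
      G.D1_le le_rfl (G.pair2 hα1 le_rfl (by omega))
    have hD2 : (LieAlgebra.derivedSeries ℂ L 2 : Submodule ℂ L)
        ≤ Submodule.span ℂ (G.e '' Set.Icc 2 (2 * n - 3 - G.z1 - G.z2)) :=
      G.D2_le hD1 (G.pair2 hα1 (by omega) (by omega))
    exact G.D3_bot (by omega) hD2
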